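/- Fix a finite simple graph G, a degree-assignment L for G, and an edge vw of G such that the graph G − vw (G with the edge vw deleted) is connected and degree-choosable. If |L(v) ∩ L(w)| ≤ 1, then G is L-swappable. -/

import Mathlib

open SimpleGraph
open scoped Classical

/-- `φ` is a proper coloring of `G` choosing colors from the lists `L`. -/
def IsLColoring {V : Type*} (G : SimpleGraph V) (L : V → Finset ℕ) (φ : V → ℕ) : Prop :=
  (∀ v, φ v ∈ L v) ∧ ∀ ⦃u w : V⦄, G.Adj u w → φ u ≠ φ w

/-- The subgraph of `G` induced by the vertices colored `α` or `β` under `φ`. -/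
def kempeGraph {V : Type*} (G : SimpleGraph V) (φ : V → ℕ) (α β : ℕ) : SimpleGraph V where
  Adj u w := G.Adj u w ∧ (φ u = α ∨ φ u = β) ∧ (φ w = α ∨ φ w = β)
  symm := ⟨fun u w h => ⟨h.1.symm, h.2.2, h.2.1⟩⟩
  loopless := ⟨fun u h => G.loopless.irrefl u h.1⟩

/-- The coloring obtained from `φ` by interchanging colors `α` and `β` on the
connected component, containing `x`, of the subgraph induced by the vertices
colored `α` or `β`. -/
noncomputable def kempeSwap {V : Type*} (G : SimpleGraph V) (φ : V → ℕ) (α β : ℕ)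
    (x : V) : V → ℕ :=
  fun v =>
    if (kempeGraph G φ α β).Reachable x v ∧ φ v = α then β
    else if (kempeGraph G φ α β).Reachable x v ∧ φ v = β then α
    else φ v

/-- `ψ` is obtained from the `L`-coloring `φ` by a single `L`-valid Kempe swap. -/
def KempeStep {V : Type*} (G : SimpleGraph V) (L : V → Finset ℕ) (φ ψ : V → ℕ) : Prop :=
  IsLColoring G L φ ∧ IsLColoring G L ψ ∧ ∃ α β x, ψ = kempeSwap G φ α β x

/-- Two colorings are `L`-equivalent if one can be obtained from the other by a
sequence of `L`-valid Kempe swaps. -/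
def LEquiv {V : Type*} (G : SimpleGraph V) (L : V → Finset ℕ) :
    (V → ℕ) → (V → ℕ) → Prop :=
  Relation.ReflTransGen (KempeStep G L)

/-- `G` has an `L`-coloring and all of its `L`-colorings are pairwise `L`-equivalent. -/
def LSwappable {V : Type*} (G : SimpleGraph V) (L : V → Finset ℕ) : Prop :=
  (∃ φ, IsLColoring G L φ) ∧
    ∀ φ ψ, IsLColoring G L φ → IsLColoring G L ψ → LEquiv G L φ ψ

/-- The degree of the vertex `v` in `G`. -/
noncomputable def gdeg {V : Type*} (G : SimpleGraph V) (v : V) : ℕ :=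
  (G.neighborSet v).ncard

/-- `G` is `L`-swappable for every degree-assignment `L`. -/
def DegreeSwappable {V : Type*} (G : SimpleGraph V) : Prop :=
  ∀ L : V → Finset ℕ, (∀ v, (L v).card = gdeg G v) → LSwappable G L

/-- `G` has an `L`-coloring for every degree-assignment `L`. -/
def DegreeChoosable {V : Type*} (G : SimpleGraph V) : Prop :=
  ∀ L : V → Finset ℕ, (∀ v, (L v).card = gdeg G v) → ∃ φ, IsLColoring G L φ

/-- `G` is `L`-swappable for every `k`-assignment `L`. -/
def KSwappable {V : Type*} (G : SimpleGraph V) (k : ℕ) : Prop :=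
  ∀ L : V → Finset ℕ, (∀ v, (L v).card = k) → LSwappable G L

/-- `G` is `L`-swappable for every `f`-assignment `L`. -/
def FSwappable {V : Type*} (G : SimpleGraph V) (f : V → ℕ) : Prop :=
  ∀ L : V → Finset ℕ, (∀ v, (L v).card = f v) → LSwappable G L

section Basic

variable {V : Type*}

lemma kempeGraph_adj {G : SimpleGraph V} {φ : V → ℕ} {α β : ℕ} {a b : V} :
    (kempeGraph G φ α β).Adj a b ↔
      G.Adj a b ∧ (φ a = α ∨ φ a = β) ∧ (φ b = α ∨ φ b = β) := Iff.rfl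

lemma kempeGraph_comm (G : SimpleGraph V) (φ : V → ℕ) (α β : ℕ) :
    kempeGraph G φ α β = kempeGraph G φ β α := by
  ext a b
  simp only [kempeGraph_adj]
  tauto

lemma kempeSwap_apply (G : SimpleGraph V) (φ : V → ℕ) (α β : ℕ) (x z : V) :
    kempeSwap G φ α β x z =
      if (kempeGraph G φ α β).Reachable x z ∧ φ z = α then β
      else if (kempeGraph G φ α β).Reachable x z ∧ φ z = β then α
      else φ z := rfl

lemma kempeSwap_comm (G : SimpleGraph V) (φ : V → ℕ) (α β : ℕ) (x : V) :
    kempeSwap G φ α β x = kempeSwap G φ β α x := by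
  funext z
  rw [kempeSwap_apply, kempeSwap_apply, ← kempeGraph_comm G φ α β]
  by_cases hR : (kempeGraph G φ α β).Reachable x z
  · simp only [hR, true_and]
    split_ifs <;> omega
  · simp [hR]

lemma kempeSwap_self (G : SimpleGraph V) (φ : V → ℕ) (α : ℕ) (x : V) :
    kempeSwap G φ α α x = φ := by
  funext z
  rw [kempeSwap_apply]
  split_ifs with h1
  · exact h1.2.symm
  · rfl

/-- The set of vertices colored `α` or `β` is invariant under a Kempe swap. -/
lemma kempeSwap_mem_pair_iff (G : SimpleGraph V) (φ : V → ℕ) (α β : ℕ) (x z : V) :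
    (kempeSwap G φ α β x z = α ∨ kempeSwap G φ α β x z = β) ↔ (φ z = α ∨ φ z = β) := by
  rw [kempeSwap_apply]
  split_ifs with h1 h2
  · exact ⟨fun _ => Or.inl h1.2, fun _ => Or.inr rfl⟩
  · exact ⟨fun _ => Or.inr h2.2, fun _ => Or.inl rfl⟩
  · rfl

lemma kempeGraph_congr {G : SimpleGraph V} {φ ψ : V → ℕ} {α β : ℕ}
    (h : ∀ z, (φ z = α ∨ φ z = β) ↔ (ψ z = α ∨ ψ z = β)) :
    kempeGraph G φ α β = kempeGraph G ψ α β := by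
  ext a b
  simp only [kempeGraph_adj, h]

lemma kempeGraph_kempeSwap (G : SimpleGraph V) (φ : V → ℕ) (α β : ℕ) (x : V) :
    kempeGraph G (kempeSwap G φ α β x) α β = kempeGraph G φ α β :=
  kempeGraph_congr fun z => kempeSwap_mem_pair_iff G φ α β x z

/-- A Kempe swap is an involution. -/
lemma kempeSwap_kempeSwap (G : SimpleGraph V) (φ : V → ℕ) (α β : ℕ) (x : V) :
    kempeSwap G (kempeSwap G φ α β x) α β x = φ := by
  funext z
  conv_lhs => rw [kempeSwap_apply]
  rw [kempeGraph_kempeSwap]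
  by_cases hR : (kempeGraph G φ α β).Reachable x z
  · simp only [hR, true_and, kempeSwap_apply]
    split_ifs <;> omega
  · simp [hR, kempeSwap_apply]

lemma KempeStep.symm {G : SimpleGraph V} {L : V → Finset ℕ} {φ ψ : V → ℕ}
    (h : KempeStep G L φ ψ) : KempeStep G L ψ φ := by
  obtain ⟨hφ, hψ, α, β, x, rfl⟩ := h
  exact ⟨hψ, hφ, α, β, x, (kempeSwap_kempeSwap G φ α β x).symm⟩

lemma LEquiv.refl (G : SimpleGraph V) (L : V → Finset ℕ) (φ : V → ℕ) : LEquiv G L φ φ :=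
  Relation.ReflTransGen.refl

lemma LEquiv.trans {G : SimpleGraph V} {L : V → Finset ℕ} {φ ψ χ : V → ℕ}
    (h1 : LEquiv G L φ ψ) (h2 : LEquiv G L ψ χ) : LEquiv G L φ χ :=
  Relation.ReflTransGen.trans h1 h2

lemma LEquiv.symm {G : SimpleGraph V} {L : V → Finset ℕ} {φ ψ : V → ℕ}
    (h : LEquiv G L φ ψ) : LEquiv G L ψ φ :=
  by
    haveI : Std.Symm (KempeStep G L) := ⟨fun _ _ hs => KempeStep.symm hs⟩
    exact Std.Symm.symm (r := Relation.ReflTransGen (KempeStep G L)) _ _ h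

lemma LEquiv.single {G : SimpleGraph V} {L : V → Finset ℕ} {φ ψ : V → ℕ}
    (h : KempeStep G L φ ψ) : LEquiv G L φ ψ :=
  Relation.ReflTransGen.single h

end Basic
section Reach

variable {V : Type*} [DecidableEq V]

lemma reachable_of_closed {H H' : SimpleGraph V} {y : V}
    (hcl : ∀ a b, H'.Adj a b → H.Reachable y a → H.Reachable y b) :
    ∀ z, H'.Reachable y z → H.Reachable y z := by
  intro z hz
  rw [SimpleGraph.reachable_iff_reflTransGen] at hz
  induction hz with
  | refl => exact SimpleGraph.Reachable.refl y
  | tail _ hab ih => exact hcl _ _ hab ih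

lemma eq_of_reachable_of_isolated {H : SimpleGraph V} {u z : V}
    (hiso : ∀ b, ¬H.Adj u b) (h : H.Reachable u z) : z = u := by
  rw [SimpleGraph.reachable_iff_reflTransGen] at h
  induction h with
  | refl => rfl
  | tail h hbc ih => exact absurd (ih ▸ hbc) (hiso _)

lemma isLColoring_mono {G G' : SimpleGraph V} {L : V → Finset ℕ} {φ : V → ℕ}
    (hle : G' ≤ G) (h : IsLColoring G L φ) : IsLColoring G' L φ :=
  ⟨h.1, fun _ _ hadj => h.2 (hle hadj)⟩

/-- Recoloring a single vertex `u` to a color `c` avoided by its neighborhood is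
a valid Kempe swap. -/
lemma kempeStep_update {G : SimpleGraph V} {L : V → Finset ℕ} {σ : V → ℕ}
    (hσ : IsLColoring G L σ) {u : V} {c : ℕ}
    (hc : c ∈ L u) (hnb : ∀ z, G.Adj u z → σ z ≠ c) :
    KempeStep G L σ (Function.update σ u c) := by
  have hiso : ∀ b, ¬(kempeGraph G σ (σ u) c).Adj u b := by
    rintro b ⟨hadj, -, hb | hb⟩
    · exact hσ.2 hadj hb.symm
    · exact hnb b hadj hb
  have hupd : IsLColoring G L (Function.update σ u c) := by
    constructor
    · intro z
      rcases eq_or_ne z u with rfl | hz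
      · simpa using hc
      · rw [Function.update_of_ne hz]; exact hσ.1 z
    · intro a b hadj
      have hab : a ≠ b := hadj.ne
      rcases eq_or_ne a u with rfl | ha
      · rw [Function.update_self, Function.update_of_ne hab.symm]
        exact fun h => hnb b hadj h.symm
      · rw [Function.update_of_ne ha]
        rcases eq_or_ne b u with rfl | hb
        · rw [Function.update_self]
          exact hnb a hadj.symm
        · rw [Function.update_of_ne hb]
          exact hσ.2 hadj
  refine ⟨hσ, hupd, σ u, c, u, ?_⟩
  funext z
  rw [kempeSwap_apply]
  rcases eq_or_ne z u with rfl | hz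
  · rw [Function.update_self, if_pos ⟨SimpleGraph.Reachable.refl _, rfl⟩]
  · have hnr : ¬(kempeGraph G σ (σ u) c).Reachable u z :=
      fun h => hz (eq_of_reachable_of_isolated hiso h)
    rw [Function.update_of_ne hz, if_neg (fun h => hnr h.1), if_neg (fun h => hnr h.1)]

/-- Two `L`-colorings differing at a single vertex are `L`-equivalent. -/
lemma lequiv_of_eq_off_vertex {G : SimpleGraph V} {L : V → Finset ℕ} {φ ψ : V → ℕ}
    (hφ : IsLColoring G L φ) (hψ : IsLColoring G L ψ)
    (u : V) (h : ∀ z, z ≠ u → φ z = ψ z) : LEquiv G L φ ψ := by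
  have hψeq : ψ = Function.update φ u (ψ u) := by
    funext z
    rcases eq_or_ne z u with rfl | hz
    · simp
    · rw [Function.update_of_ne hz, h z hz]
  rw [hψeq]
  exact LEquiv.single (kempeStep_update hφ (hψ.1 u)
    (fun z hadj hzc => hψ.2 hadj ((h z (G.ne_of_adj hadj).symm).symm.trans hzc ▸ rfl)))

end Reach
section Star

variable {V : Type*} [Fintype V] [DecidableEq V]

/-- `G` with all edges at `u` removed. -/
def starDelete (G : SimpleGraph V) (u : V) : SimpleGraph V :=
  G.deleteEdges {e | u ∈ e}

lemma starDelete_adj {G : SimpleGraph V} {u a b : V} :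
    (starDelete G u).Adj a b ↔ G.Adj a b ∧ a ≠ u ∧ b ≠ u := by
  simp only [starDelete, SimpleGraph.deleteEdges_adj, Set.mem_setOf_eq, Sym2.mem_iff]
  push_neg
  constructor
  · rintro ⟨h, h1, h2⟩; exact ⟨h, Ne.symm h1, Ne.symm h2⟩
  · rintro ⟨h, h1, h2⟩; exact ⟨h, Ne.symm h1, Ne.symm h2⟩

lemma starDelete_le (G : SimpleGraph V) (u : V) : starDelete G u ≤ G :=
  SimpleGraph.deleteEdges_le _

lemma starDelete_neighborSet_self (G : SimpleGraph V) (u : V) :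
    (starDelete G u).neighborSet u = ∅ := by
  ext b
  simp [SimpleGraph.mem_neighborSet, starDelete_adj]

lemma gdeg_mono {G H : SimpleGraph V} (hle : H ≤ G) (z : V) : gdeg H z ≤ gdeg G z :=
  Set.ncard_le_ncard (fun b hb => hle hb) (Set.toFinite _)

lemma gdeg_pos {G : SimpleGraph V} {z b : V} (h : G.Adj z b) : 0 < gdeg G z :=
  (Set.ncard_pos (Set.toFinite _)).2 ⟨b, h⟩

lemma gdeg_starDelete_self (G : SimpleGraph V) (u : V) : gdeg (starDelete G u) u = 0 := by
  rw [gdeg, starDelete_neighborSet_self, Set.ncard_empty]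

lemma starDelete_neighborSet {G : SimpleGraph V} {u z : V} (hz : z ≠ u) :
    (starDelete G u).neighborSet z = G.neighborSet z \ {u} := by
  ext b
  simp only [SimpleGraph.mem_neighborSet, starDelete_adj, Set.mem_diff,
    Set.mem_singleton_iff]
  tauto

lemma gdeg_starDelete_lt {G : SimpleGraph V} {u z : V} (hadj : G.Adj u z) :
    gdeg (starDelete G u) z < gdeg G z := by
  rw [gdeg, gdeg, starDelete_neighborSet (G.ne_of_adj hadj).symm]
  have hu : u ∈ G.neighborSet z := hadj.symm
  have := Set.ncard_diff_singleton_add_one hu (Set.toFinite _)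
  omega

lemma starDelete_edgeSet_ncard_lt {G : SimpleGraph V} {u b : V} (hadj : G.Adj u b) :
    (starDelete G u).edgeSet.ncard < G.edgeSet.ncard := by
  apply Set.ncard_lt_ncard _ (Set.toFinite _)
  rw [starDelete, SimpleGraph.edgeSet_deleteEdges]
  constructor
  · exact Set.diff_subset
  · intro hsub
    have h1 : s(u, b) ∈ G.edgeSet := hadj
    have h2 := hsub h1
    simp only [Set.mem_diff, Set.mem_setOf_eq, Sym2.mem_iff] at h2
    exact h2.2 (Or.inl trivial)

/-- Walking in `G` to `u`, one can walk in `G` minus the star of `u` to a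
neighbor of `u`. -/
lemma reach_to_neighbor {G : SimpleGraph V} {u z : V}
    (h : G.Reachable z u) (hz : z ≠ u) :
    ∃ z', G.Adj u z' ∧ (starDelete G u).Reachable z z' := by
  rw [SimpleGraph.reachable_iff_reflTransGen] at h
  induction h using Relation.ReflTransGen.head_induction_on with
  | refl => exact absurd rfl hz
  | head hac hcb ih =>
    rename_i a c
    rcases eq_or_ne c u with rfl | hc
    · exact ⟨a, hac.symm, SimpleGraph.Reachable.refl a⟩
    · obtain ⟨z', h1, h2⟩ := ih hc
      exact ⟨z', h1, (SimpleGraph.Adj.reachable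
        (starDelete_adj.2 ⟨hac, hz, hc⟩)).trans h2⟩

/-- A walk avoiding the component of `u` survives deleting the star of `u`. -/
lemma reach_starDelete_of_not_reach {G : SimpleGraph V} {u z x : V}
    (h : G.Reachable z x) (hu : ¬G.Reachable z u) :
    (starDelete G u).Reachable z x := by
  rw [SimpleGraph.reachable_iff_reflTransGen] at h
  induction h with
  | refl => exact SimpleGraph.Reachable.refl z
  | tail hzb hbc ih =>
    rename_i b c
    have hb : b ≠ u := by
      rintro rfl
      exact hu ((SimpleGraph.reachable_iff_reflTransGen _ _).2 hzb)
    have hc : c ≠ u := by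
      rintro rfl
      exact hu ((SimpleGraph.reachable_iff_reflTransGen _ _).2 (hzb.tail hbc))
    exact ih.trans (SimpleGraph.Adj.reachable (starDelete_adj.2 ⟨hbc, hb, hc⟩))

end Star
section Lift

variable {V : Type*} [Fintype V] [DecidableEq V]

lemma kempeSwap_apply_not_reach {G : SimpleGraph V} {φ : V → ℕ} {α β : ℕ} {y z : V}
    (h : ¬(kempeGraph G φ α β).Reachable y z) : kempeSwap G φ α β y z = φ z := by
  rw [kempeSwap_apply, if_neg (fun hh => h hh.1), if_neg (fun hh => h hh.1)]

lemma kempeSwap_apply_flipA {G : SimpleGraph V} {φ : V → ℕ} {α β : ℕ} {y z : V}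
    (h : (kempeGraph G φ α β).Reachable y z) (ha : φ z = α) :
    kempeSwap G φ α β y z = β := by
  rw [kempeSwap_apply, if_pos ⟨h, ha⟩]

lemma kempeSwap_apply_flipB {G : SimpleGraph V} {φ : V → ℕ} {α β : ℕ} {y z : V}
    (hne : α ≠ β) (h : (kempeGraph G φ α β).Reachable y z) (hb : φ z = β) :
    kempeSwap G φ α β y z = α := by
  rw [kempeSwap_apply]
  rw [if_neg, if_pos ⟨h, hb⟩]
  rintro ⟨-, h2⟩
  exact hne (h2 ▸ hb)

lemma kempeSwap_apply_not_mem {G : SimpleGraph V} {φ : V → ℕ} {α β : ℕ} {y z : V}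
    (h1 : φ z ≠ α) (h2 : φ z ≠ β) : kempeSwap G φ α β y z = φ z := by
  rw [kempeSwap_apply, if_neg (fun hh => h1 hh.2), if_neg (fun hh => h2 hh.2)]

/-- Kempe graph of the star-deleted graph is a subgraph of that of `G`, for
colorings agreeing off `u`. -/
lemma kempeGraph_starDelete_le {G : SimpleGraph V} {u : V} {sh s1 : V → ℕ} {α β : ℕ}
    (hagree : ∀ z, z ≠ u → sh z = s1 z) :
    kempeGraph (starDelete G u) s1 α β ≤ kempeGraph G sh α β := by
  rintro a b ⟨hadj, h1, h2⟩
  rw [starDelete_adj] at hadj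
  exact ⟨hadj.1, by rw [hagree a hadj.2.1]; exact h1, by rw [hagree b hadj.2.2]; exact h2⟩

lemma kempeGraph_starDelete_isolated (G : SimpleGraph V) (u : V) (s1 : V → ℕ) (α β : ℕ) :
    ∀ b, ¬(kempeGraph (starDelete G u) s1 α β).Adj u b := by
  rintro b ⟨hadj, -, -⟩
  exact (starDelete_adj.1 hadj).2.1 rfl

lemma ne_u_of_reach {G : SimpleGraph V} {u y : V} {s1 : V → ℕ} {α β : ℕ} (hy : y ≠ u)
    {z : V} (h : (kempeGraph (starDelete G u) s1 α β).Reachable y z) : z ≠ u := by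
  intro hzu
  exact hy (eq_of_reachable_of_isolated (kempeGraph_starDelete_isolated G u s1 α β)
    (hzu ▸ h.symm))

/-- Core lifting lemma: if no vertex of the swapped `G − star(u)` Kempe component is
Kempe-adjacent (in `G`) to `u`, the swap can be performed in `G` directly. -/
lemma liftCore {G : SimpleGraph V} {L : V → Finset ℕ} {u y : V} {sh s1 : V → ℕ} {α β : ℕ}
    (hsh : IsLColoring G L sh) (hs1 : IsLColoring (starDelete G u) L s1)
    (ht1 : IsLColoring (starDelete G u) L (kempeSwap (starDelete G u) s1 α β y))
    (hagree : ∀ z, z ≠ u → sh z = s1 z) (hy : y ≠ u)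
    (hclose : ∀ a, (kempeGraph (starDelete G u) s1 α β).Reachable y a →
      (kempeGraph G sh α β).Adj a u → False)
    (hup : ∀ z, G.Adj u z → (kempeGraph (starDelete G u) s1 α β).Reachable y z →
      ((s1 z = α → β ≠ sh u) ∧ (s1 z = β → α ≠ sh u))) :
    KempeStep G L sh (kempeSwap G sh α β y) ∧
      (∀ z, z ≠ u → kempeSwap G sh α β y z = kempeSwap (starDelete G u) s1 α β y z) := by
  set G' := starDelete G u with hG'
  have kmono := kempeGraph_starDelete_le (G := G) (α := α) (β := β) hagree
  have hsubset : ∀ z, (kempeGraph G sh α β).Reachable y z →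
      (kempeGraph G' s1 α β).Reachable y z := by
    apply reachable_of_closed
    intro a b hab ha
    rcases eq_or_ne b u with rfl | hb
    · exact absurd (hclose a ha hab) id
    · have hau : a ≠ u := ne_u_of_reach hy ha
      refine ha.trans (SimpleGraph.Adj.reachable ?_)
      refine ⟨starDelete_adj.2 ⟨hab.1, hau, hb⟩, ?_, ?_⟩
      · rw [← hagree a hau]; exact hab.2.1
      · rw [← hagree b hb]; exact hab.2.2
  have hRu : ¬(kempeGraph G sh α β).Reachable y u := fun h =>
    (ne_u_of_reach hy (hsubset u h)) rfl
  have hvalu : kempeSwap G sh α β y u = sh u := kempeSwap_apply_not_reach hRu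
  have hoff : ∀ z, z ≠ u →
      kempeSwap G sh α β y z = kempeSwap (starDelete G u) s1 α β y z := by
    intro z hz
    rw [kempeSwap_apply, kempeSwap_apply, hagree z hz]
    by_cases hR : (kempeGraph G sh α β).Reachable y z
    · have hK : (kempeGraph G' s1 α β).Reachable y z := hsubset z hR
      simp only [hR, show (kempeGraph (starDelete G u) s1 α β).Reachable y z from hK, true_and]
    · have hK : ¬(kempeGraph G' s1 α β).Reachable y z := fun h =>
        hR (SimpleGraph.Reachable.mono kmono h)
      simp only [hR, show ¬(kempeGraph (starDelete G u) s1 α β).Reachable y z from hK, false_and,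
        if_false]
  have hcol : IsLColoring G L (kempeSwap G sh α β y) := by
    constructor
    · intro z
      rcases eq_or_ne z u with rfl | hz
      · rw [hvalu]; exact hsh.1 z
      · rw [hoff z hz]; exact ht1.1 z
    · intro a b hadj
      have hprop_u : ∀ z, G.Adj u z → kempeSwap G sh α β y z ≠ sh u := by
        intro z hz
        have hzu : z ≠ u := hz.ne'
        by_cases hR : (kempeGraph G sh α β).Reachable y z
        · have hK := hsubset z hR
          have hups := hup z hz hK
          by_cases h1 : sh z = α
          · rw [kempeSwap_apply_flipA hR h1]
            exact hups.1 ((hagree z hzu).symm.trans h1)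
          · by_cases h2 : sh z = β
            · by_cases hne : α = β
              · exact absurd (h2.trans hne.symm) h1
              · rw [kempeSwap_apply_flipB hne hR h2]
                exact hups.2 ((hagree z hzu).symm.trans h2)
            · rw [kempeSwap_apply_not_mem h1 h2]
              exact fun h => hsh.2 hz h.symm
        · rw [kempeSwap_apply_not_reach hR]
          exact fun h => hsh.2 hz h.symm
      rcases eq_or_ne a u with rfl | ha
      · rw [hvalu]
        exact fun h => hprop_u b hadj h.symm
      · rcases eq_or_ne b u with rfl | hb
        · rw [hvalu]
          exact hprop_u a hadj.symm
        · rw [hoff a ha, hoff b hb]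
          exact ht1.2 (starDelete_adj.2 ⟨hadj, ha, hb⟩)
  exact ⟨⟨hsh, hcol, α, β, y, rfl⟩, hoff⟩

/-- Lifting when `u`'s color is not one of the swapped pair. -/
lemma liftNotPair {G : SimpleGraph V} {L : V → Finset ℕ} {u y : V} {sh s1 : V → ℕ} {α β : ℕ}
    (hsh : IsLColoring G L sh) (hs1 : IsLColoring (starDelete G u) L s1)
    (ht1 : IsLColoring (starDelete G u) L (kempeSwap (starDelete G u) s1 α β y))
    (hagree : ∀ z, z ≠ u → sh z = s1 z) (hy : y ≠ u)
    (hnpa : sh u ≠ α) (hnpb : sh u ≠ β) :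
    KempeStep G L sh (kempeSwap G sh α β y) ∧
      (∀ z, z ≠ u → kempeSwap G sh α β y z = kempeSwap (starDelete G u) s1 α β y z) := by
  apply liftCore hsh hs1 ht1 hagree hy
  · intro a _ hadj
    rcases hadj.2.2 with h | h
    · exact hnpa h
    · exact hnpb h
  · intro z _ _
    exact ⟨fun _ => Ne.symm hnpb, fun _ => Ne.symm hnpa⟩

end Lift
section LiftHard

variable {V : Type*} [Fintype V] [DecidableEq V]

/-- Lifting when `sh u = α`. -/
lemma liftHard {G : SimpleGraph V} {L : V → Finset ℕ} {u y : V} {sh s1 : V → ℕ} {α β : ℕ}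
    (hsurp : gdeg G u < (L u).card)
    (hsh : IsLColoring G L sh) (hs1 : IsLColoring (starDelete G u) L s1)
    (ht1 : IsLColoring (starDelete G u) L (kempeSwap (starDelete G u) s1 α β y))
    (hagree : ∀ z, z ≠ u → sh z = s1 z) (hy : y ≠ u) (hne : α ≠ β) (hA : sh u = α) :
    ∃ th, IsLColoring G L th ∧
      (∀ z, z ≠ u → th z = kempeSwap (starDelete G u) s1 α β y z) ∧ LEquiv G L sh th := by
  by_cases hβnb : ∃ zb, G.Adj u zb ∧ sh zb = β
  case neg =>
    -- no neighbor of u is colored β: u is Kempe-isolated in G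
    have h := liftCore hsh hs1 ht1 hagree hy ?_ ?_
    · exact ⟨kempeSwap G sh α β y, h.1.2.1, h.2, LEquiv.single h.1⟩
    · intro a _ hadj
      rcases hadj.2.1 with h1 | h1
      · exact hsh.2 hadj.1 (h1.trans hA.symm)
      · exact hβnb ⟨a, hadj.1.symm, h1⟩
    · intro z hz hK
      constructor
      · intro h1
        exact absurd ((hagree z hz.ne').trans h1) (fun hh => hsh.2 hz (hA.trans hh.symm))
      · intro h1
        exact absurd ((hagree z hz.ne').trans h1) (fun hh => hβnb ⟨z, hz, hh⟩)
  case pos =>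
  obtain ⟨zb, hzbadj, hzbβ⟩ := hβnb
  by_cases hesc : ∃ c, c ∈ L u ∧ c ≠ α ∧ c ≠ β ∧ ∀ z, G.Adj u z → sh z ≠ c
  case pos =>
    -- escape: recolor u to c first
    obtain ⟨c, hcL, hcα, hcβ, hcnb⟩ := hesc
    have hstep1 := kempeStep_update hsh hcL hcnb
    have hsh'col : IsLColoring G L (Function.update sh u c) := hstep1.2.1
    have hagree' : ∀ z, z ≠ u → Function.update sh u c z = s1 z := by
      intro z hz
      rw [Function.update_of_ne hz]
      exact hagree z hz
    have h := liftNotPair hsh'col hs1 ht1 hagree' hy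
      (by rw [Function.update_self]; exact hcα) (by rw [Function.update_self]; exact hcβ)
    exact ⟨kempeSwap G (Function.update sh u c) α β y, h.1.2.1, h.2,
      (LEquiv.single hstep1).trans (LEquiv.single h.1)⟩
  case neg =>
  -- tight case: L u = {α} ∪ sh(N(u)), neighbors rainbow-colored
  have hforb : ∀ c, c ∈ L u → c = α ∨ ∃ z, G.Adj u z ∧ sh z = c := by
    intro c hc
    by_cases h1 : c = α
    · exact Or.inl h1
    by_cases h2 : c = β
    · exact Or.inr ⟨zb, hzbadj, by rw [hzbβ, h2]⟩
    right
    by_contra hcon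
    push_neg at hcon
    exact hesc ⟨c, hc, h1, h2, hcon⟩
  have hNfin : (G.neighborSet u).Finite := Set.toFinite _
  set Nf : Finset V := hNfin.toFinset with hNfdef
  have hNfmem : ∀ z, z ∈ Nf ↔ G.Adj u z := by
    intro z
    rw [hNfdef, Set.Finite.mem_toFinset, SimpleGraph.mem_neighborSet]
  have hNfcard : Nf.card = gdeg G u := by
    rw [gdeg, hNfdef, Set.ncard_eq_toFinset_card']
    congr 1
    ext z
    simp [Set.Finite.mem_toFinset]
  have hsub : L u ⊆ insert α (Nf.image sh) := by
    intro c hc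
    rcases hforb c hc with h1 | ⟨z, hz, hzc⟩
    · rw [h1]; exact Finset.mem_insert_self α _
    · exact Finset.mem_insert_of_mem (Finset.mem_image.2 ⟨z, (hNfmem z).2 hz, hzc⟩)
  have hc1 : (L u).card ≤ (Nf.image sh).card + 1 :=
    le_trans (Finset.card_le_card hsub) (Finset.card_insert_le _ _)
  have hc2 : (Nf.image sh).card ≤ Nf.card := Finset.card_image_le
  have himcard : (Nf.image sh).card = Nf.card := by omega
  have hLeq : L u = insert α (Nf.image sh) := by
    apply Finset.eq_of_subset_of_card_le hsub
    have := Finset.card_insert_le α (Nf.image sh)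
    omega
  have hαim : α ∉ Nf.image sh := by
    intro hmem
    have : insert α (Nf.image sh) = Nf.image sh := Finset.insert_eq_self.2 hmem
    rw [hLeq, this] at hsurp
    omega
  have hinj : Set.InjOn sh ↑Nf := Finset.card_image_iff.1 himcard
  have hαnb : ∀ z, G.Adj u z → sh z ≠ α := by
    intro z hz hzα
    exact hαim (Finset.mem_image.2 ⟨z, (hNfmem z).2 hz, hzα⟩)
  have huniqβ : ∀ z, G.Adj u z → sh z = β → z = zb := by
    intro z hz hzβ
    exact hinj (Finset.mem_coe.2 ((hNfmem z).2 hz)) (Finset.mem_coe.2 ((hNfmem zb).2 hzbadj))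
      (hzβ.trans hzbβ.symm)
  have hβLu : β ∈ L u := by
    rw [hLeq]
    exact Finset.mem_insert_of_mem (Finset.mem_image.2 ⟨zb, (hNfmem zb).2 hzbadj, hzbβ⟩)
  by_cases hK : (kempeGraph (starDelete G u) s1 α β).Reachable y zb
  case neg =>
    -- zb is outside the swapped component; u is not G-Kempe-reachable from y
    have h := liftCore hsh hs1 ht1 hagree hy ?_ ?_
    · exact ⟨kempeSwap G sh α β y, h.1.2.1, h.2, LEquiv.single h.1⟩
    · intro a ha hadj
      rcases hadj.2.1 with h1 | h1
      · exact hαnb a hadj.1.symm h1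
      · exact hK ((huniqβ a hadj.1.symm h1) ▸ ha)
    · intro z hz hKz
      constructor
      · intro h1
        exact absurd ((hagree z hz.ne').trans h1) (hαnb z hz)
      · intro h1
        have := huniqβ z hz ((hagree z hz.ne').trans h1)
        exact absurd (this ▸ hKz) hK
  case pos =>
  -- the hard subcase: u joins the swapped component and flips to β
  set G' := starDelete G u with hG'def
  have kmono := kempeGraph_starDelete_le (G := G) (α := α) (β := β) hagree
  have hRzb : (kempeGraph G sh α β).Reachable y zb := SimpleGraph.Reachable.mono kmono hK
  have hadjzbu : (kempeGraph G sh α β).Adj zb u :=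
    ⟨hzbadj.symm, Or.inr hzbβ, Or.inl hA⟩
  have hRu : (kempeGraph G sh α β).Reachable y u :=
    hRzb.trans (SimpleGraph.Adj.reachable hadjzbu)
  have hc3 : ∀ z, (kempeGraph G sh α β).Reachable y z →
      z = u ∨ (kempeGraph G' s1 α β).Reachable y z := by
    intro z hzr
    rw [SimpleGraph.reachable_iff_reflTransGen] at hzr
    induction hzr with
    | refl => exact Or.inr (SimpleGraph.Reachable.refl y)
    | @tail p q hyp hpq ih =>
      rcases ih with rfl | hKp
      · rcases hpq.2.2 with h1 | h1
        · exact absurd h1 (hαnb q hpq.1)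
        · exact Or.inr ((huniqβ q hpq.1 h1) ▸ hK)
      · have hpu : p ≠ u := ne_u_of_reach hy hKp
        rcases eq_or_ne q u with rfl | hq
        · exact Or.inl rfl
        · refine Or.inr (hKp.trans (SimpleGraph.Adj.reachable ?_))
          refine ⟨starDelete_adj.2 ⟨hpq.1, hpu, hq⟩, ?_, ?_⟩
          · rw [← hagree p hpu]; exact hpq.2.1
          · rw [← hagree q hq]; exact hpq.2.2
  have hiff : ∀ z, z ≠ u → ((kempeGraph G sh α β).Reachable y z ↔
      (kempeGraph G' s1 α β).Reachable y z) := by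
    intro z hz
    constructor
    · intro h
      rcases hc3 z h with rfl | hh
      · exact absurd rfl hz
      · exact hh
    · exact fun h => SimpleGraph.Reachable.mono kmono h
  set th := kempeSwap G sh α β y with hthdef
  have hthu : th u = β := kempeSwap_apply_flipA hRu hA
  have hoff : ∀ z, z ≠ u → th z = kempeSwap G' s1 α β y z := by
    intro z hz
    rw [hthdef, kempeSwap_apply, kempeSwap_apply, hagree z hz]
    by_cases hR : (kempeGraph G sh α β).Reachable y z
    · have hKz : (kempeGraph G' s1 α β).Reachable y z := (hiff z hz).1 hR
      simp only [hR, hKz, true_and]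
    · have hKz : ¬(kempeGraph G' s1 α β).Reachable y z := fun h => hR ((hiff z hz).2 h)
      simp only [hR, hKz, false_and, if_false]
  have hprop_u : ∀ z, G.Adj u z → th z ≠ β := by
    intro z hz
    have hzu : z ≠ u := hz.ne'
    by_cases hR : (kempeGraph G sh α β).Reachable y z
    · by_cases h1 : sh z = α
      · exact absurd h1 (hαnb z hz)
      · by_cases h2 : sh z = β
        · rw [hthdef, kempeSwap_apply_flipB hne hR h2]
          exact hne
        · rw [hthdef, kempeSwap_apply_not_mem h1 h2]
          exact h2
    · rw [hthdef, kempeSwap_apply_not_reach hR]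
      intro h2
      exact hR ((huniqβ z hz h2) ▸ hRzb)
  have hcol : IsLColoring G L th := by
    constructor
    · intro z
      rcases eq_or_ne z u with rfl | hz
      · rw [hthu]; exact hβLu
      · rw [hoff z hz]; exact ht1.1 z
    · intro a b hadj
      rcases eq_or_ne a u with rfl | ha
      · rw [hthu]
        exact fun h => hprop_u b hadj h.symm
      · rcases eq_or_ne b u with rfl | hb
        · rw [hthu]
          exact hprop_u a hadj.symm
        · rw [hoff a ha, hoff b hb]
          exact ht1.2 (starDelete_adj.2 ⟨hadj, ha, hb⟩)
  exact ⟨th, hcol, hoff, LEquiv.single ⟨hsh, hcol, α, β, y, rfl⟩⟩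

/-- The full lifting lemma: a valid Kempe step in `G − star(u)` can be simulated
in `G` on colorings agreeing off `u`, provided `u` has surplus. -/
lemma liftLemma {G : SimpleGraph V} {L : V → Finset ℕ} {u : V}
    (hsurp : gdeg G u < (L u).card)
    {sh s1 t1 : V → ℕ}
    (hsh : IsLColoring G L sh) (hstep : KempeStep (starDelete G u) L s1 t1)
    (hagree : ∀ z, z ≠ u → sh z = s1 z) :
    ∃ th, IsLColoring G L th ∧ (∀ z, z ≠ u → th z = t1 z) ∧ LEquiv G L sh th := by
  obtain ⟨hs1, ht1, α, β, y, rfl⟩ := hstep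
  by_cases hch : ∀ z, z ≠ u → kempeSwap (starDelete G u) s1 α β y z = s1 z
  · exact ⟨sh, hsh, fun z hz => (hagree z hz).trans (hch z hz).symm, LEquiv.refl _ _ _⟩
  · push_neg at hch
    obtain ⟨z0, hz0u, hz0⟩ := hch
    have hne : α ≠ β := by
      rintro rfl
      rw [kempeSwap_self] at hz0
      exact hz0 rfl
    have hRz0 : (kempeGraph (starDelete G u) s1 α β).Reachable y z0 := by
      by_contra hr
      exact hz0 (kempeSwap_apply_not_reach hr)
    have hy : y ≠ u := by
      intro hyu
      exact hz0u (eq_of_reachable_of_isolated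
        (kempeGraph_starDelete_isolated G u s1 α β) (hyu ▸ hRz0))
    by_cases hp : sh u = α
    · exact liftHard hsurp hsh hs1 ht1 hagree hy hne hp
    · by_cases hp2 : sh u = β
      · have e1 : kempeSwap (starDelete G u) s1 α β y = kempeSwap (starDelete G u) s1 β α y :=
          kempeSwap_comm _ _ _ _ _
        obtain ⟨th, h1, h2, h3⟩ :=
          liftHard hsurp hsh hs1 (e1 ▸ ht1) hagree hy (Ne.symm hne) hp2
        exact ⟨th, h1, fun z hz => (h2 z hz).trans (by rw [← e1]), h3⟩
      · have h := liftNotPair hsh hs1 ht1 hagree hy hp hp2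
        exact ⟨kempeSwap G sh α β y, h.1.2.1, h.2, LEquiv.single h.1⟩

end LiftHard
section KeyLemma

variable {V : Type*} [Fintype V] [DecidableEq V]

lemma lequiv_of_no_edges {G : SimpleGraph V} {L : V → Finset ℕ}
    (hno : ∀ a b, ¬G.Adj a b) (ψ : V → ℕ) (hψ : IsLColoring G L ψ) :
    ∀ (D : Finset V) (φ : V → ℕ), IsLColoring G L φ → (∀ z, z ∉ D → φ z = ψ z) →
      LEquiv G L φ ψ := by
  intro D
  induction D using Finset.induction_on with
  | empty =>
    intro φ hφ hagree
    have : φ = ψ := funext fun z => hagree z (Finset.notMem_empty z)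
    exact this ▸ LEquiv.refl G L ψ
  | insert x D hx ihD =>
    intro φ hφ hagree
    have hstep := kempeStep_update hφ (hψ.1 x) (fun z hz => absurd hz (hno x z))
    refine (LEquiv.single hstep).trans (ihD _ hstep.2.1 ?_)
    intro z hz
    rcases eq_or_ne z x with rfl | hzx
    · exact Function.update_self _ _ _
    · rw [Function.update_of_ne hzx]
      refine hagree z ?_
      intro hmem
      rcases Finset.mem_insert.1 hmem with h | h
      · exact hzx h
      · exact hz h

/-- **Key Lemma.** If `deg ≤ |L|` everywhere and every vertex can reach a vertex
with surplus, then `G` is `L`-swappable. -/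
theorem keyLemma : ∀ (n : ℕ) (G : SimpleGraph V) (L : V → Finset ℕ),
    G.edgeSet.ncard ≤ n →
    (∀ y, gdeg G y ≤ (L y).card) →
    (∀ z, ∃ z', G.Reachable z z' ∧ gdeg G z' < (L z').card) →
    LSwappable G L := by
  intro n
  induction n with
  | zero =>
    intro G L hcard hdeg hsurp
    have hE : G.edgeSet = ∅ :=
      (Set.ncard_eq_zero (Set.toFinite _)).1 (le_antisymm hcard (Nat.zero_le _))
    have hno : ∀ a b, ¬G.Adj a b := by
      intro a b hab
      exact absurd (hE ▸ hab : s(a,b) ∈ (∅ : Set (Sym2 V))) (Set.notMem_empty _)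
    have hLne : ∀ z, (L z).Nonempty := by
      intro z
      obtain ⟨z', hr, hs⟩ := hsurp z
      have : z' = z := eq_of_reachable_of_isolated (fun b => hno z b) hr
      rw [← this]
      exact Finset.card_pos.1 (by omega)
    refine ⟨⟨fun z => (hLne z).choose, fun z => (hLne z).choose_spec,
      fun a b hab => absurd hab (hno a b)⟩, ?_⟩
    intro φ ψ hφ hψ
    exact lequiv_of_no_edges hno ψ hψ Finset.univ φ hφ
      (fun z hz => absurd (Finset.mem_univ z) hz)
  | succ n ih =>
    intro G L hcard hdeg hsurp
    by_cases hcard0 : G.edgeSet.ncard ≤ n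
    · exact ih G L hcard0 hdeg hsurp
    · obtain ⟨e, he⟩ := Set.nonempty_of_ncard_ne_zero
        (by omega : G.edgeSet.ncard ≠ 0)
      obtain ⟨a, b, hab⟩ : ∃ a b, G.Adj a b := by
        induction e with
        | h a b => exact ⟨a, b, he⟩
      -- find a surplus vertex u of positive degree
      obtain ⟨u, hreach, hu⟩ := hsurp a
      have hdeg1 : 0 < gdeg G u := by
        rcases Relation.ReflTransGen.cases_tail
          ((SimpleGraph.reachable_iff_reflTransGen _ _).1 hreach) with h | ⟨c, _, hcu⟩
        · rw [h]
          exact gdeg_pos hab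
        · exact gdeg_pos hcu.symm
      obtain ⟨zz, hzz⟩ : ∃ z, G.Adj u z := by
        have hgd : gdeg G u = (G.neighborSet u).ncard := rfl
        obtain ⟨z, hz⟩ := Set.nonempty_of_ncard_ne_zero
          (by omega : (G.neighborSet u).ncard ≠ 0)
        exact ⟨z, hz⟩
      -- delete the star at u
      have hcard' : (starDelete G u).edgeSet.ncard ≤ n :=
        Nat.lt_succ_iff.1 (lt_of_lt_of_le (starDelete_edgeSet_ncard_lt hzz) hcard)
      have hdeg' : ∀ y, gdeg (starDelete G u) y ≤ (L y).card :=
        fun y => le_trans (gdeg_mono (starDelete_le G u) y) (hdeg y)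
      have hsurp' : ∀ z, ∃ z', (starDelete G u).Reachable z z' ∧
          gdeg (starDelete G u) z' < (L z').card := by
        intro z
        rcases eq_or_ne z u with rfl | hz
        · refine ⟨z, SimpleGraph.Reachable.refl z, ?_⟩
          rw [gdeg_starDelete_self]
          have := hdeg1
          have := hu
          omega
        · by_cases hzu : G.Reachable z u
          · obtain ⟨z', hadj', hreach'⟩ := reach_to_neighbor hzu hz
            exact ⟨z', hreach', lt_of_lt_of_le (gdeg_starDelete_lt hadj') (hdeg z')⟩
          · obtain ⟨z', hr, hs⟩ := hsurp z
            exact ⟨z', reach_starDelete_of_not_reach hr hzu,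
              lt_of_le_of_lt (gdeg_mono (starDelete_le G u) z') hs⟩
      obtain ⟨⟨s1ex, hs1ex⟩, hequiv'⟩ := ih (starDelete G u) L hcard' hdeg' hsurp'
      -- extend a (G − star u)-coloring to G by recoloring u
      have hNfin : (G.neighborSet u).Finite := Set.toFinite _
      have hNfmem : ∀ z, z ∈ hNfin.toFinset ↔ G.Adj u z := by
        intro z
        rw [Set.Finite.mem_toFinset, SimpleGraph.mem_neighborSet]
      have hNfcard : hNfin.toFinset.card = gdeg G u := by
        rw [gdeg, Set.ncard_eq_toFinset_card']
        congr 1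
        ext z
        simp [Set.Finite.mem_toFinset]
      have hextend : ∀ χ : V → ℕ, IsLColoring (starDelete G u) L χ →
          ∃ χ', IsLColoring G L χ' ∧ ∀ z, z ≠ u → χ' z = χ z := by
        intro χ hχ
        have hnon : ((L u) \ (hNfin.toFinset.image χ)).Nonempty := by
          apply Finset.card_pos.1
          have h1 : (hNfin.toFinset.image χ).card ≤ hNfin.toFinset.card :=
            Finset.card_image_le
          have h2 := Finset.le_card_sdiff (hNfin.toFinset.image χ) (L u)
          omega
        obtain ⟨c, hc⟩ := hnon
        rw [Finset.mem_sdiff] at hc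
        refine ⟨Function.update χ u c, ⟨?_, ?_⟩, fun z hz => Function.update_of_ne hz _ _⟩
        · intro z
          rcases eq_or_ne z u with rfl | hz
          · rw [Function.update_self]; exact hc.1
          · rw [Function.update_of_ne hz]; exact hχ.1 z
        · intro p q hpq
          have hnbq : ∀ z, G.Adj u z → χ z ≠ c := by
            intro z hz hzc
            exact hc.2 (Finset.mem_image.2 ⟨z, (hNfmem z).2 hz, hzc⟩)
          rcases eq_or_ne p u with rfl | hp
          · rw [Function.update_self, Function.update_of_ne hpq.ne']
            exact fun h => hnbq q hpq h.symm
          · rw [Function.update_of_ne hp]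
            rcases eq_or_ne q u with rfl | hq
            · rw [Function.update_self]
              exact hnbq p hpq.symm
            · rw [Function.update_of_ne hq]
              exact hχ.2 (starDelete_adj.2 ⟨hpq, hp, hq⟩)
      obtain ⟨φ0, hφ0, _⟩ := hextend s1ex hs1ex
      refine ⟨⟨φ0, hφ0⟩, ?_⟩
      intro φ ψ hφ hψ
      have hφ' : IsLColoring (starDelete G u) L φ := isLColoring_mono (starDelete_le G u) hφ
      have hψ' : IsLColoring (starDelete G u) L ψ := isLColoring_mono (starDelete_le G u) hψ
      have hchain := hequiv' φ ψ hφ' hψ'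
      -- lift the chain of swaps step by step
      have hlift : ∀ χ : V → ℕ, Relation.ReflTransGen (KempeStep (starDelete G u) L) φ χ →
          ∃ χ', IsLColoring G L χ' ∧ (∀ z, z ≠ u → χ' z = χ z) ∧ LEquiv G L φ χ' := by
        intro χ hχ
        induction hχ with
        | refl => exact ⟨φ, hφ, fun _ _ => rfl, LEquiv.refl G L φ⟩
        | tail hst hstep ihc =>
          obtain ⟨χ', h1, h2, h3⟩ := ihc
          obtain ⟨τ', g1, g2, g3⟩ := liftLemma hu h1 hstep h2
          exact ⟨τ', g1, g2, h3.trans g3⟩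
      obtain ⟨ψ', h1, h2, h3⟩ := hlift ψ hchain
      exact h3.trans (lequiv_of_eq_off_vertex h1 hψ u h2)

end KeyLemma
section EdgeLift

variable {V : Type*} [Fintype V] [DecidableEq V]

lemma kempeGraph_mono {G₁ G : SimpleGraph V} (hle : G₁ ≤ G) (φ : V → ℕ) (α β : ℕ) :
    kempeGraph G₁ φ α β ≤ kempeGraph G φ α β := by
  rintro a b ⟨hadj, h1, h2⟩
  exact ⟨hle hadj, h1, h2⟩

lemma edge_isL {G : SimpleGraph V} {v w : V} {L M : V → Finset ℕ}
    (hsub : ∀ z, M z ⊆ L z) (hdisj : ∀ x, x ∈ M v → x ∈ M w → False)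
    {φ : V → ℕ} (hφ : IsLColoring (G.deleteEdges {s(v,w)}) M φ) :
    IsLColoring G L φ := by
  constructor
  · exact fun z => hsub z (hφ.1 z)
  · intro a b hab
    by_cases he : s(a,b) = s(v,w)
    · intro h
      rcases Sym2.eq_iff.1 he with ⟨h1, h2⟩ | ⟨h1, h2⟩
      · subst h1; subst h2
        have hb := hφ.1 b
        rw [← h] at hb
        exact hdisj (φ a) (hφ.1 a) hb
      · subst h1; subst h2
        have ha := hφ.1 a
        rw [h] at ha
        exact hdisj (φ b) (hφ.1 b) ha
    · exact hφ.2 (SimpleGraph.deleteEdges_adj.2 ⟨hab, by simp [he]⟩)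

/-- A valid Kempe step of `G − vw` with lists `M ⊆ L` satisfying `M v ∩ M w = ∅` is
a valid Kempe step of `G` with lists `L`. -/
lemma edge_kempeStep {G : SimpleGraph V} {v w : V} (hvw : G.Adj v w)
    {L M : V → Finset ℕ}
    (hsub : ∀ z, M z ⊆ L z) (hdisj : ∀ x, x ∈ M v → x ∈ M w → False)
    {σ τ : V → ℕ} (h : KempeStep (G.deleteEdges {s(v,w)}) M σ τ) :
    KempeStep G L σ τ := by
  obtain ⟨hσ, hτ, α, β, y, rfl⟩ := h
  have hσG : IsLColoring G L σ := edge_isL hsub hdisj hσ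
  have hτG : IsLColoring G L (kempeSwap (G.deleteEdges {s(v,w)}) σ α β y) :=
    edge_isL hsub hdisj hτ
  refine ⟨hσG, hτG, α, β, y, ?_⟩
  by_cases hab : α = β
  · rw [hab, kempeSwap_self, kempeSwap_self]
  have kmono := kempeGraph_mono (SimpleGraph.deleteEdges_le {s(v,w)}) σ α β (G := G)
  have hflip : ∀ p q, G.Adj p q → (∀ x, x ∈ M p → x ∈ M q → False) →
      (kempeGraph G σ α β).Adj p q →
      (kempeGraph (G.deleteEdges {s(v,w)}) σ α β).Reachable y p → False := by
    intro p q hpq hd hadjG ha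
    have hpqne : σ p ≠ σ q := hσG.2 hpq
    have hMq := hσ.1 q
    rcases hadjG.2.1 with h1 | h1
    · have h2 : σ q = β := by
        rcases hadjG.2.2 with h' | h'
        · exact absurd (h1.trans h'.symm) hpqne
        · exact h'
      have hτp : kempeSwap (G.deleteEdges {s(v,w)}) σ α β y p = β :=
        kempeSwap_apply_flipA ha h1
      have hMp := hτ.1 p
      rw [hτp] at hMp
      exact hd β hMp (h2 ▸ hMq)
    · have h2 : σ q = α := by
        rcases hadjG.2.2 with h' | h'
        · exact h'
        · exact absurd (h1.trans h'.symm) hpqne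
      have hτp : kempeSwap (G.deleteEdges {s(v,w)}) σ α β y p = α :=
        kempeSwap_apply_flipB hab ha h1
      have hMp := hτ.1 p
      rw [hτp] at hMp
      exact hd α hMp (h2 ▸ hMq)
  have hsubset : ∀ z, (kempeGraph G σ α β).Reachable y z →
      (kempeGraph (G.deleteEdges {s(v,w)}) σ α β).Reachable y z := by
    apply reachable_of_closed
    intro a b hadjG ha
    by_cases he : s(a,b) = s(v,w)
    · exfalso
      rcases Sym2.eq_iff.1 he with ⟨h1, h2⟩ | ⟨h1, h2⟩
      · exact hflip a b hadjG.1 (by rw [h1, h2]; exact hdisj) hadjG ha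
      · exact hflip a b hadjG.1
          (by rw [h1, h2]; exact fun x hx1 hx2 => hdisj x hx2 hx1) hadjG ha
    · exact ha.trans (SimpleGraph.Adj.reachable
        ⟨SimpleGraph.deleteEdges_adj.2 ⟨hadjG.1, by simp [he]⟩, hadjG.2⟩)
  funext z
  rw [kempeSwap_apply, kempeSwap_apply]
  by_cases hR : (kempeGraph (G.deleteEdges {s(v,w)}) σ α β).Reachable y z
  · have hRG : (kempeGraph G σ α β).Reachable y z := SimpleGraph.Reachable.mono kmono hR
    simp only [hR, hRG, true_and]
  · have hRG : ¬(kempeGraph G σ α β).Reachable y z := fun h => hR (hsubset z h)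
    simp only [hR, hRG, false_and, if_false]

end EdgeLift
section Final

variable {V : Type*} [Fintype V] [DecidableEq V]

lemma deleteEdge_neighborSet {G : SimpleGraph V} {v w : V} (hne : v ≠ w) :
    (G.deleteEdges {s(v,w)}).neighborSet v = G.neighborSet v \ {w} := by
  ext b
  simp only [SimpleGraph.mem_neighborSet, SimpleGraph.deleteEdges_adj,
    Set.mem_singleton_iff, Set.mem_diff]
  constructor
  · rintro ⟨hadj, hs⟩
    refine ⟨hadj, fun hb => hs ?_⟩
    rw [hb]
  · rintro ⟨hadj, hb⟩
    refine ⟨hadj, fun hs => ?_⟩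
    rcases Sym2.eq_iff.1 hs with ⟨-, h2⟩ | ⟨h1, -⟩
    · exact hb h2
    · exact hne h1

lemma deleteEdge_neighborSet_other {G : SimpleGraph V} {v w z : V}
    (hzv : z ≠ v) (hzw : z ≠ w) :
    (G.deleteEdges {s(v,w)}).neighborSet z = G.neighborSet z := by
  ext b
  simp only [SimpleGraph.mem_neighborSet, SimpleGraph.deleteEdges_adj,
    Set.mem_singleton_iff]
  constructor
  · exact fun h => h.1
  · intro h
    refine ⟨h, fun hs => ?_⟩
    rcases Sym2.eq_iff.1 hs with ⟨h1, -⟩ | ⟨h1, -⟩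
    · exact hzv h1
    · exact hzw h1

lemma gdeg_deleteEdge_v {G : SimpleGraph V} {v w : V} (hvw : G.Adj v w) :
    gdeg (G.deleteEdges {s(v,w)}) v + 1 = gdeg G v := by
  rw [gdeg, gdeg, deleteEdge_neighborSet hvw.ne]
  exact Set.ncard_diff_singleton_add_one (hvw : w ∈ G.neighborSet v) (Set.toFinite _)

lemma gdeg_deleteEdge_w {G : SimpleGraph V} {v w : V} (hvw : G.Adj v w) :
    gdeg (G.deleteEdges {s(v,w)}) w + 1 = gdeg G w := by
  have hcomm : ({s(v,w)} : Set (Sym2 V)) = {s(w,v)} := by rw [Sym2.eq_swap]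
  rw [hcomm]
  exact gdeg_deleteEdge_v hvw.symm

theorem stmt_8' {V : Type*} [Fintype V] [DecidableEq V] (G : SimpleGraph V)
    (v w : V) (hvw : G.Adj v w)
    (hconn : (G.deleteEdges {s(v, w)}).Connected)
    (hch : DegreeChoosable (G.deleteEdges {s(v, w)}))
    (L : V → Finset ℕ) (hL : ∀ u, (L u).card = gdeg G u)
    (hcap : (L v ∩ L w).card ≤ 1) :
    LSwappable G L := by
  classical
  have hne : v ≠ w := hvw.ne
  have hdv := gdeg_deleteEdge_v hvw
  have hdw := gdeg_deleteEdge_w hvw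
  have hdo : ∀ z, z ≠ v → z ≠ w → gdeg (G.deleteEdges {s(v,w)}) z = gdeg G z := by
    intro z hzv hzw
    rw [gdeg, gdeg, deleteEdge_neighborSet_other hzv hzw]
  have hvpos : 0 < gdeg G v := gdeg_pos hvw
  have hwpos : 0 < gdeg G w := gdeg_pos hvw.symm
  rcases Finset.eq_empty_or_nonempty (L v ∩ L w) with hS | ⟨c, hc⟩
  · -- disjoint lists case
    have hdisj : ∀ x, x ∈ L v → x ∈ L w → False := by
      intro x h1 h2
      exact Finset.eq_empty_iff_forall_notMem.1 hS x (Finset.mem_inter.2 ⟨h1, h2⟩)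
    have hvne : (L v).Nonempty := Finset.card_pos.1 (by rw [hL v]; omega)
    have hwne : (L w).Nonempty := Finset.card_pos.1 (by rw [hL w]; omega)
    -- bridge coloring from degree-choosability
    set L3 := Function.update (Function.update L v ((L v).erase hvne.choose)) w
      ((L w).erase hwne.choose) with hL3
    have hL3v : L3 v = (L v).erase hvne.choose := by
      rw [hL3, Function.update_of_ne hne, Function.update_self]
    have hL3w : L3 w = (L w).erase hwne.choose := by
      rw [hL3, Function.update_self]
    have hL3o : ∀ z, z ≠ v → z ≠ w → L3 z = L z := by
      intro z hzv hzw
      rw [hL3, Function.update_of_ne hzw, Function.update_of_ne hzv]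
    have hL3card : ∀ z, (L3 z).card = gdeg (G.deleteEdges {s(v,w)}) z := by
      intro z
      rcases eq_or_ne z v with rfl | hzv
      · rw [hL3v, Finset.card_erase_of_mem hvne.choose_spec, hL z]
        omega
      · rcases eq_or_ne z w with rfl | hzw
        · rw [hL3w, Finset.card_erase_of_mem hwne.choose_spec, hL z]
          omega
        · rw [hL3o z hzv hzw, hL z, hdo z hzv hzw]
    obtain ⟨σs, hσs⟩ := hch L3 hL3card
    have hL3sub : ∀ z, L3 z ⊆ L z := by
      intro z
      rcases eq_or_ne z v with rfl | hzv
      · rw [hL3v]; exact Finset.erase_subset _ _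
      · rcases eq_or_ne z w with rfl | hzw
        · rw [hL3w]; exact Finset.erase_subset _ _
        · rw [hL3o z hzv hzw]
    have hσsL : IsLColoring (G.deleteEdges {s(v,w)}) L σs :=
      ⟨fun z => hL3sub z (hσs.1 z), hσs.2⟩
    have hσsG : IsLColoring G L σs := edge_isL (fun _ => subset_rfl) hdisj hσsL
    refine ⟨⟨σs, hσsG⟩, ?_⟩
    intro φ ψ hφ hψ
    have hsw := keyLemma (V := V) (G.deleteEdges {s(v,w)}).edgeSet.ncard
      (G.deleteEdges {s(v,w)}) L le_rfl ?_ ?_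
    · have hchain := hsw.2 φ ψ (isLColoring_mono (SimpleGraph.deleteEdges_le _) hφ)
        (isLColoring_mono (SimpleGraph.deleteEdges_le _) hψ)
      exact Relation.ReflTransGen.mono
        (fun a b h => edge_kempeStep hvw (fun _ => subset_rfl) hdisj h) _ _ hchain
    · intro y
      rcases eq_or_ne y v with rfl | hzv
      · rw [hL y]; omega
      · rcases eq_or_ne y w with rfl | hzw
        · rw [hL y]; omega
        · rw [hL y, hdo y hzv hzw]
    · intro z
      refine ⟨v, hconn.preconnected z v, ?_⟩
      rw [hL v]; omega
  · -- common color c case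
    have hcv : c ∈ L v := (Finset.mem_inter.1 hc).1
    have hcw : c ∈ L w := (Finset.mem_inter.1 hc).2
    have hSuniq : ∀ x, x ∈ L v → x ∈ L w → x = c := by
      intro x h1 h2
      exact Finset.card_le_one.1 hcap x (Finset.mem_inter.2 ⟨h1, h2⟩) c hc
    -- the three shrunken list assignments
    set L' := Function.update L v ((L v).erase c) with hL'
    set L'' := Function.update L w ((L w).erase c) with hL''
    set L3 := Function.update L' w ((L w).erase c) with hL3
    have hL'v : L' v = (L v).erase c := Function.update_self _ _ _
    have hL'w : L' w = L w := Function.update_of_ne hne.symm _ _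
    have hL'o : ∀ z, z ≠ v → L' z = L z := fun z hz => Function.update_of_ne hz _ _
    have hL''w : L'' w = (L w).erase c := Function.update_self _ _ _
    have hL''v : L'' v = L v := Function.update_of_ne hne _ _
    have hL''o : ∀ z, z ≠ w → L'' z = L z := fun z hz => Function.update_of_ne hz _ _
    have hL3v : L3 v = (L v).erase c := by rw [hL3, Function.update_of_ne hne, hL'v]
    have hL3w : L3 w = (L w).erase c := by rw [hL3, Function.update_self]
    have hL3o : ∀ z, z ≠ v → z ≠ w → L3 z = L z := by
      intro z hzv hzw
      rw [hL3, Function.update_of_ne hzw, hL'o z hzv]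
    -- disjointness of the shrunken assignments at v, w
    have hdisj' : ∀ x, x ∈ L' v → x ∈ L' w → False := by
      intro x h1 h2
      rw [hL'v] at h1
      rw [hL'w] at h2
      exact (Finset.mem_erase.1 h1).1 (hSuniq x (Finset.mem_erase.1 h1).2 h2)
    have hdisj'' : ∀ x, x ∈ L'' v → x ∈ L'' w → False := by
      intro x h1 h2
      rw [hL''v] at h1
      rw [hL''w] at h2
      exact (Finset.mem_erase.1 h2).1 (hSuniq x h1 (Finset.mem_erase.1 h2).2)
    have hsub' : ∀ z, L' z ⊆ L z := by
      intro z
      rcases eq_or_ne z v with rfl | hz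
      · rw [hL'v]; exact Finset.erase_subset _ _
      · rw [hL'o z hz]
    have hsub'' : ∀ z, L'' z ⊆ L z := by
      intro z
      rcases eq_or_ne z w with rfl | hz
      · rw [hL''w]; exact Finset.erase_subset _ _
      · rw [hL''o z hz]
    -- bridge coloring avoiding c at both v and w
    have hL3card : ∀ z, (L3 z).card = gdeg (G.deleteEdges {s(v,w)}) z := by
      intro z
      rcases eq_or_ne z v with rfl | hzv
      · rw [hL3v, Finset.card_erase_of_mem hcv, hL z]; omega
      · rcases eq_or_ne z w with rfl | hzw
        · rw [hL3w, Finset.card_erase_of_mem hcw, hL z]; omega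
        · rw [hL3o z hzv hzw, hL z, hdo z hzv hzw]
    obtain ⟨σs, hσs⟩ := hch L3 hL3card
    have hσsL' : IsLColoring (G.deleteEdges {s(v,w)}) L' σs := by
      refine ⟨fun z => ?_, hσs.2⟩
      rcases eq_or_ne z v with rfl | hzv
      · rw [hL'v]
        have := hσs.1 z
        rw [hL3v] at this
        exact this
      · rcases eq_or_ne z w with rfl | hzw
        · rw [hL'w]
          have := hσs.1 z
          rw [hL3w] at this
          exact Finset.erase_subset _ _ this
        · rw [hL'o z hzv]
          have := hσs.1 z
          rw [hL3o z hzv hzw] at this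
          exact this
    have hσsL'' : IsLColoring (G.deleteEdges {s(v,w)}) L'' σs := by
      refine ⟨fun z => ?_, hσs.2⟩
      rcases eq_or_ne z v with rfl | hzv
      · rw [hL''v]
        have := hσs.1 z
        rw [hL3v] at this
        exact Finset.erase_subset _ _ this
      · rcases eq_or_ne z w with rfl | hzw
        · rw [hL''w]
          have := hσs.1 z
          rw [hL3w] at this
          exact this
        · rw [hL''o z hzw]
          have := hσs.1 z
          rw [hL3o z hzv hzw] at this
          exact this
    have hσsG : IsLColoring G L σs := edge_isL hsub' hdisj' hσsL'
    -- the two key-lemma instances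
    have hswL' : LSwappable (G.deleteEdges {s(v,w)}) L' := by
      refine keyLemma (V := V) (G.deleteEdges {s(v,w)}).edgeSet.ncard
        (G.deleteEdges {s(v,w)}) L' le_rfl ?_ ?_
      · intro y
        rcases eq_or_ne y v with rfl | hzv
        · rw [hL'v, Finset.card_erase_of_mem hcv, hL y]; omega
        · rcases eq_or_ne y w with rfl | hzw
          · rw [hL'w, hL y]; omega
          · rw [hL'o y hzv, hL y, hdo y hzv hzw]
      · intro z
        refine ⟨w, hconn.preconnected z w, ?_⟩
        rw [hL'w, hL w]; omega
    have hswL'' : LSwappable (G.deleteEdges {s(v,w)}) L'' := by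
      refine keyLemma (V := V) (G.deleteEdges {s(v,w)}).edgeSet.ncard
        (G.deleteEdges {s(v,w)}) L'' le_rfl ?_ ?_
      · intro y
        rcases eq_or_ne y v with rfl | hzv
        · rw [hL''v, hL y]; omega
        · rcases eq_or_ne y w with rfl | hzw
          · rw [hL''w, Finset.card_erase_of_mem hcw, hL y]; omega
          · rw [hL''o y hzw, hL y, hdo y hzv hzw]
      · intro z
        refine ⟨v, hconn.preconnected z v, ?_⟩
        rw [hL''v, hL v]; omega
    -- every L-coloring of G is L-equivalent to the bridge coloring
    have hbridge : ∀ φ, IsLColoring G L φ → LEquiv G L φ σs := by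
      intro φ hφ
      by_cases hφv : φ v = c
      · -- use L'' (φ w ≠ c)
        have hφw : φ w ≠ c := fun h => hφ.2 hvw (hφv.trans h.symm)
        have hφ'' : IsLColoring (G.deleteEdges {s(v,w)}) L'' φ := by
          refine ⟨fun z => ?_, fun a b hab => hφ.2 ((SimpleGraph.deleteEdges_le _) hab)⟩
          rcases eq_or_ne z w with rfl | hzw
          · rw [hL''w]
            exact Finset.mem_erase.2 ⟨hφw, hφ.1 z⟩
          · rw [hL''o z hzw]
            exact hφ.1 z
        have hchain := hswL''.2 φ σs hφ'' hσsL''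
        exact Relation.ReflTransGen.mono
          (fun a b h => edge_kempeStep hvw hsub'' hdisj'' h) _ _ hchain
      · -- use L'
        have hφ' : IsLColoring (G.deleteEdges {s(v,w)}) L' φ := by
          refine ⟨fun z => ?_, fun a b hab => hφ.2 ((SimpleGraph.deleteEdges_le _) hab)⟩
          rcases eq_or_ne z v with rfl | hzv
          · rw [hL'v]
            exact Finset.mem_erase.2 ⟨hφv, hφ.1 z⟩
          · rw [hL'o z hzv]
            exact hφ.1 z
        have hchain := hswL'.2 φ σs hφ' hσsL'
        exact Relation.ReflTransGen.mono
          (fun a b h => edge_kempeStep hvw hsub' hdisj' h) _ _ hchain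
    exact ⟨⟨σs, hσsG⟩, fun φ ψ hφ hψ => (hbridge φ hφ).trans (hbridge ψ hψ).symm⟩

end Final
/-- **Lemma.** Fix a degree-assignment `L` for `G` and an edge `vw` such that `G − vw`
is connected and degree-choosable.  If `|L(v) ∩ L(w)| ≤ 1`, then `G` is
`L`-swappable. -/
theorem stmt_8 {V : Type*} [Fintype V] [DecidableEq V] (G : SimpleGraph V)
    (v w : V) (hvw : G.Adj v w)
    (hconn : (G.deleteEdges {s(v, w)}).Connected)
    (hch : DegreeChoosable (G.deleteEdges {s(v, w)}))
    (L : V → Finset ℕ) (hL : ∀ u, (L u).card = gdeg G u)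
    (hcap : (L v ∩ L w).card ≤ 1) :
    LSwappable G L := by
  exact stmt_8' G v w hvw hconn hch L hL hcap
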